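/- Let F : ℝ² → ℝ² be a C¹ map whose derivative DF(s,t) at every point, expressed in a global frame, is invertible with operator norm of the inverse uniformly bounded (e.g. DF(ṡ,ṫ) = ṡ f₁(s,t) e₁ + ṫ e₂ with f₁ ≥ 1 everywhere and the frame (e₁,e₂) uniformly comparable to the standard basis). Then F is a diffeomorphism onto ℝ² (Hadamard's global inverse function theorem in this special diagonal case). -/

import Mathlib

open Set Filter Metric


/-- Key hypothesis: strict derivative everywhere invertible with uniformly bounded inverse. -/
def HadKey (F : ℝ × ℝ → ℝ × ℝ) (C : ℝ) : Prop :=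
  ∀ a : ℝ × ℝ, ∃ g : (ℝ × ℝ) ≃L[ℝ] (ℝ × ℝ),
    HasStrictFDerivAt F (g : (ℝ × ℝ) →L[ℝ] (ℝ × ℝ)) a ∧
      ‖(g.symm : (ℝ × ℝ) →L[ℝ] (ℝ × ℝ))‖ ≤ C

lemma had_chart {F : ℝ × ℝ → ℝ × ℝ} {C : ℝ} (hkey : HadKey F C) (b : ℝ × ℝ) :
    ∃ U V : Set (ℝ × ℝ), IsOpen U ∧ IsOpen V ∧ b ∈ U ∧ F b ∈ V ∧ Set.InjOn F U ∧
      ∃ ψ : ℝ × ℝ → ℝ × ℝ, ψ (F b) = b ∧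
        ∀ z ∈ V, F (ψ z) = z ∧ ψ z ∈ U ∧
          ∃ L : (ℝ × ℝ) →L[ℝ] (ℝ × ℝ), HasFDerivAt ψ L z ∧ ‖L‖ ≤ C := by
  obtain ⟨g, hg, -⟩ := hkey b
  set φ := hg.toOpenPartialHomeomorph F with hφ
  have hcoe : (φ : ℝ × ℝ → ℝ × ℝ) = F := hg.toOpenPartialHomeomorph_coe
  refine ⟨φ.source, φ.target, φ.open_source, φ.open_target,
    hg.mem_toOpenPartialHomeomorph_source, hg.image_mem_toOpenPartialHomeomorph_target, ?_,
    φ.symm, ?_, ?_⟩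
  · rw [← hcoe]; exact φ.injOn
  · have := φ.left_inv hg.mem_toOpenPartialHomeomorph_source
    rwa [hcoe] at this
  · intro z hz
    have h1 : F (φ.symm z) = z := by
      have := φ.right_inv hz; rwa [hcoe] at this
    have h2 : φ.symm z ∈ φ.source := φ.map_target hz
    refine ⟨h1, h2, ?_⟩
    -- derivative of the inverse at z
    set a' := φ.symm z with ha'
    obtain ⟨g', hg', hg'C⟩ := hkey a'
    refine ⟨(g'.symm : (ℝ × ℝ) →L[ℝ] (ℝ × ℝ)), ?_, hg'C⟩
    have hstrict : HasStrictFDerivAt (hg'.localInverse F g' a')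
        (g'.symm : (ℝ × ℝ) →L[ℝ] (ℝ × ℝ)) (F a') := hg'.to_localInverse
    have hFa' : F a' = z := h1
    -- φ.symm =ᶠ[𝓝 z] localInverse
    have hev : φ.symm =ᶠ[nhds z] hg'.localInverse F g' a' := by
      have htend : Filter.Tendsto φ.symm (nhds z) (nhds a') :=
        (φ.continuousAt_symm hz).tendsto
      have h3 : ∀ᶠ w in nhds z, w ∈ φ.target := φ.open_target.mem_nhds hz
      have h4 : ∀ᶠ w in nhds z, hg'.localInverse F g' a' (F (φ.symm w)) = φ.symm w :=
        htend.eventually hg'.eventually_left_inverse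
      filter_upwards [h3, h4] with w hw h4w
      have : F (φ.symm w) = w := by have := φ.right_inv hw; rwa [hcoe] at this
      rw [this] at h4w
      exact h4w.symm
    rw [← hFa'] at hev ⊢
    exact hstrict.hasFDerivAt.congr_of_eventuallyEq hev

lemma had_uniq {F : ℝ × ℝ → ℝ × ℝ} {C : ℝ} (hkey : HadKey F C)
    {γ γ' : ℝ → ℝ × ℝ} (hγ : Continuous γ) (hγ' : Continuous γ') {s : ℝ}
    (h0 : γ 0 = γ' 0) (hl : ∀ t ∈ Icc (0:ℝ) s, F (γ t) = F (γ' t)) :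
    ∀ t ∈ Icc (0:ℝ) s, γ t = γ' t := by
  intro t ht
  have key : Icc (0:ℝ) s ⊆ {u : ℝ | γ u = γ' u} := by
    apply IsClosed.Icc_subset_of_forall_mem_nhdsWithin
    · exact ((isClosed_eq hγ hγ').inter isClosed_Icc)
    · exact h0
    · rintro u ⟨hu, hu'⟩
      obtain ⟨U, V, hUo, hVo, hbU, hFbV, hinj, ψ, hψb, hψ⟩ := had_chart hkey (γ u)
      have h1 : ∀ᶠ w in nhds u, γ w ∈ U := (hγ.continuousAt).eventually_mem (hUo.mem_nhds hbU)
      have h2 : ∀ᶠ w in nhds u, γ' w ∈ U := by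
        have : γ' u ∈ U := by rw [← hu]; exact hbU
        exact (hγ'.continuousAt).eventually_mem (hUo.mem_nhds this)
      have h3 : Ioo u s ∈ nhdsWithin u (Ioi u) := Ioo_mem_nhdsGT hu'.2
      filter_upwards [nhdsWithin_le_nhds h1, nhdsWithin_le_nhds h2, h3] with w hw1 hw2 hw3
      exact hinj hw1 hw2 (hl w ⟨le_trans hu'.1 hw3.1.le, hw3.2.le⟩)
  exact key ht

lemma had_transport {F : ℝ × ℝ → ℝ × ℝ} {U V : Set (ℝ × ℝ)}
    (hU : IsOpen U) (hinj : Set.InjOn F U) {ψ : ℝ × ℝ → ℝ × ℝ}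
    (hψ : ∀ z ∈ V, F (ψ z) = z ∧ ψ z ∈ U) (hψc : ContinuousOn ψ V)
    {p : ℝ → ℝ × ℝ} (hp : Continuous p) {γ' : ℝ → ℝ × ℝ} (hγ' : Continuous γ')
    {a c : ℝ} (hac : a ≤ c) (hpV : ∀ u ∈ Icc a c, p u ∈ V)
    (hstart : γ' a ∈ U) (hlift : ∀ u ∈ Icc a c, F (γ' u) = p u) :
    ∀ u ∈ Icc a c, γ' u = ψ (p u) := by
  -- clamped version of ψ ∘ p, globally continuous
  set q : ℝ → ℝ × ℝ := fun u => ψ (p (max a (min u c))) with hq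
  have hclamp : ∀ u, max a (min u c) ∈ Icc a c := fun u =>
    ⟨le_max_left _ _, max_le (by linarith) (min_le_right _ _)⟩
  have hqc : Continuous q := by
    apply hψc.comp_continuous
    · exact hp.comp (continuous_const.max (continuous_id.min continuous_const))
    · intro u; exact hpV _ (hclamp u)
  have hqeq : ∀ u ∈ Icc a c, q u = ψ (p u) := by
    intro u hu
    have : max a (min u c) = u := by
      rw [min_eq_left hu.2, max_eq_right hu.1]
    rw [hq]; simp only [this]
  have key : Icc a c ⊆ {u : ℝ | γ' u = q u} := by
    apply IsClosed.Icc_subset_of_forall_mem_nhdsWithin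
    · exact (isClosed_eq hγ' hqc).inter isClosed_Icc
    · show γ' a = q a
      rw [hqeq a ⟨le_rfl, hac⟩]
      have hpa := hψ (p a) (hpV a ⟨le_rfl, hac⟩)
      exact hinj hstart hpa.2 (by rw [hlift a ⟨le_rfl, hac⟩, hpa.1])
    · rintro u ⟨hu, hu'⟩
      have hγ'U : γ' u ∈ U := by
        rw [hu, hqeq u ⟨hu'.1, hu'.2.le⟩]
        exact (hψ (p u) (hpV u ⟨hu'.1, hu'.2.le⟩)).2
      have h1 : ∀ᶠ w in nhds u, γ' w ∈ U := (hγ'.continuousAt).eventually_mem (hU.mem_nhds hγ'U)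
      have h2 : ∀ᶠ w in nhds u, q w ∈ U := by
        have : q u ∈ U := by rw [← hu]; exact hγ'U
        exact (hqc.continuousAt).eventually_mem (hU.mem_nhds this)
      have h3 : Ioo u c ∈ nhdsWithin u (Ioi u) := Ioo_mem_nhdsGT hu'.2
      filter_upwards [nhdsWithin_le_nhds h1, nhdsWithin_le_nhds h2, h3] with w hw1 hw2 hw3
      have hwIcc : w ∈ Icc a c := ⟨le_trans hu'.1 hw3.1.le, hw3.2.le⟩
      apply hinj hw1 hw2
      rw [hlift w hwIcc, hqeq w hwIcc, (hψ (p w) (hpV w hwIcc)).1]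
  intro u hu
  rw [key hu, hqeq u hu]

lemma had_lift {F : ℝ × ℝ → ℝ × ℝ} {C : ℝ} (hkey : HadKey F C) (hC : 0 ≤ C)
    (x v : ℝ × ℝ) :
    ∃ γ : ℝ → ℝ × ℝ, LipschitzWith (Real.toNNReal (C * ‖v‖)) γ ∧ γ 0 = x ∧
      ∀ t ∈ Icc (0:ℝ) 1, F (γ t) = F x + t • v := by
  classical
  have hFc : Continuous F := by
    rw [continuous_iff_continuousAt]
    intro a
    obtain ⟨g, hg, -⟩ := hkey a
    exact hg.continuousAt
  set K := Real.toNNReal (C * ‖v‖) with hKdef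
  have hKr : (K : ℝ) = C * ‖v‖ := Real.coe_toNNReal _ (mul_nonneg hC (norm_nonneg v))
  set ℓ : ℝ → ℝ × ℝ := fun t => F x + t • v with hℓdef
  have hℓc : Continuous ℓ := continuous_const.add (continuous_id.smul continuous_const)
  set W : ℝ → (ℝ → ℝ × ℝ) → Prop := fun s γ =>
    LipschitzWith K γ ∧ γ 0 = x ∧ (∀ t ∈ Icc (0:ℝ) s, F (γ t) = ℓ t) ∧
      (∀ t, s ≤ t → γ t = γ s) ∧ (∀ t, t ≤ 0 → γ t = γ 0) with hWdef
  set A := {s : ℝ | ∃ γ, W s γ} with hAdef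
  -- pairwise distance bound
  have hdist : ∀ s₁ s₂ γ₁ γ₂, 0 ≤ s₁ → s₁ ≤ s₂ → W s₁ γ₁ → W s₂ γ₂ →
      ∀ t, dist (γ₁ t) (γ₂ t) ≤ K * (s₂ - s₁) := by
    rintro s₁ s₂ γ₁ γ₂ hs₁ h12 ⟨hL₁, h0₁, hl₁, ha₁, hb₁⟩ ⟨hL₂, h0₂, hl₂, ha₂, hb₂⟩ t
    have hKs : (0:ℝ) ≤ K * (s₂ - s₁) := mul_nonneg K.2 (by linarith)
    have hagree : ∀ u ∈ Icc (0:ℝ) s₁, γ₁ u = γ₂ u := by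
      apply had_uniq hkey hL₁.continuous hL₂.continuous (h0₁.trans h0₂.symm)
      intro u hu
      rw [hl₁ u hu, hl₂ u ⟨hu.1, hu.2.trans h12⟩]
    rcases le_or_gt t 0 with ht0 | ht0
    · rw [hb₁ t ht0, hb₂ t ht0, h0₁, h0₂]; simpa using hKs
    rcases le_or_gt t s₁ with ht | ht
    · rw [hagree t ⟨ht0.le, ht⟩]; simpa using hKs
    · have e1 : γ₁ t = γ₂ s₁ := by rw [ha₁ t ht.le, hagree s₁ ⟨hs₁, le_rfl⟩]
      set m := min t s₂ with hm
      have e2 : γ₂ t = γ₂ m := by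
        rcases le_total t s₂ with h | h
        · rw [hm, min_eq_left h]
        · rw [hm, min_eq_right h, ha₂ t h]
      rw [e1, e2]
      have hm1 : s₁ ≤ m := le_min ht.le h12
      have hm2 : m ≤ s₂ := min_le_right _ _
      calc dist (γ₂ s₁) (γ₂ m) ≤ K * dist s₁ m := hL₂.dist_le_mul _ _
        _ ≤ K * (s₂ - s₁) := by
            apply mul_le_mul_of_nonneg_left _ K.2
            rw [Real.dist_eq, abs_sub_comm, abs_of_nonneg (by linarith)]
            linarith
  -- downward closedness
  have hdown : ∀ s ∈ A, ∀ s', 0 ≤ s' → s' ≤ s → s' ∈ A := by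
    rintro s ⟨γ, hL, h0, hl, ha, hb⟩ s' hs'0 hs's
    refine ⟨fun t => γ (min t s'), ?_, ?_, ?_, ?_, ?_⟩
    · simpa [Function.comp_def] using hL.comp (LipschitzWith.id.min_const s')
    · show γ (min 0 s') = x
      rw [min_eq_left hs'0, h0]
    · intro t ht; show F (γ (min t s')) = ℓ t
      rw [min_eq_left ht.2]; exact hl t ⟨ht.1, ht.2.trans hs's⟩
    · intro t ht; show γ (min t s') = γ (min s' s')
      rw [min_eq_right ht, min_self]
    · intro t ht
      show γ (min t s') = γ (min 0 s')
      rw [min_eq_left (ht.trans hs'0), min_eq_left hs'0, hb t ht]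
  -- 0 ∈ A
  have h0A : (0:ℝ) ∈ A := by
    refine ⟨fun _ => x, (LipschitzWith.const x).weaken zero_le, rfl, ?_, fun _ _ => rfl,
      fun _ _ => rfl⟩
    intro t ht
    have : t = 0 := le_antisymm ht.2 ht.1
    simp [this, hℓdef]
  -- closedness
  have hclosed : IsClosed (A ∩ Icc (0:ℝ) 1) := by
    apply IsSeqClosed.isClosed
    intro u s hu hlim
    have hIcc : s ∈ Icc (0:ℝ) 1 :=
      isClosed_Icc.isSeqClosed (fun n => (hu n).2) hlim
    refine ⟨?_, hIcc⟩
    by_cases hex : ∃ n, s ≤ u n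
    · obtain ⟨n, hn⟩ := hex
      exact hdown (u n) (hu n).1 s hIcc.1 hn
    push_neg at hex
    -- select fast approximating subsequence
    have hsel : ∀ k : ℕ, ∃ n, s - u n < 1 / (k + 1) := by
      intro k
      have h1 : (0:ℝ) < 1 / (k + 1) := by positivity
      obtain ⟨N, hN⟩ := (Metric.tendsto_atTop.1 hlim) (1 / (k + 1)) h1
      refine ⟨N, ?_⟩
      have := hN N le_rfl
      rw [Real.dist_eq] at this
      have h2 := abs_lt.1 this
      linarith [h2.1]
    choose nk hnk using hsel
    set w : ℕ → ℝ := fun k => u (nk k) with hwdef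
    have hwA : ∀ k, ∃ γ, W (w k) γ := fun k => (hu (nk k)).1
    choose gam hgam using hwA
    have hw0 : ∀ k, (0:ℝ) ≤ w k := fun k => (hu (nk k)).2.1
    have hws : ∀ k, w k < s := fun k => hex (nk k)
    have hwk : ∀ k, s - w k < 1 / (k + 1) := hnk
    -- Cauchy
    have hcauchy : ∀ t, CauchySeq (fun k => gam k t) := by
      intro t
      apply cauchySeq_of_le_tendsto_0 (fun N : ℕ => 2 * (K : ℝ) * (1 / (N + 1)))
      · intro k j N hk hj
        have hbnd : ∀ a b : ℕ, N ≤ a → N ≤ b → w a ≤ w b →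
            dist (gam a t) (gam b t) ≤ 2 * (K:ℝ) * (1 / (N + 1)) := by
          intro a b hA hB hab
          have h1 := hdist (w a) (w b) (gam a) (gam b) (hw0 a) hab (hgam a) (hgam b) t
          have h2 : (K:ℝ) * (w b - w a) ≤ (K:ℝ) * (1 / (N + 1)) := by
            apply mul_le_mul_of_nonneg_left _ K.2
            have h3 : (1:ℝ) / (a + 1) ≤ 1 / (N + 1) := by
              apply one_div_le_one_div_of_le (by positivity)
              exact_mod_cast by omega
            have := hwk a
            linarith [hws b]
          have hK0 : (0:ℝ) ≤ (K:ℝ) * (1 / (N+1)) := by positivity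
          calc dist (gam a t) (gam b t) ≤ (K:ℝ) * (w b - w a) := h1
            _ ≤ (K:ℝ) * (1 / (N + 1)) := h2
            _ ≤ 2 * (K:ℝ) * (1 / (N + 1)) := by nlinarith [hK0]
        rcases le_total (w k) (w j) with h | h
        · exact hbnd k j hk hj h
        · rw [dist_comm]; exact hbnd j k hj hk h
      · have h0 : Filter.Tendsto (fun N : ℕ => (1:ℝ) / (N + 1)) atTop (nhds 0) :=
          tendsto_one_div_add_atTop_nhds_zero_nat
        have := h0.const_mul (2 * (K:ℝ))
        simpa using this
    have hten : ∀ t, ∃ l, Filter.Tendsto (fun k => gam k t) atTop (nhds l) :=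
      fun t => cauchySeq_tendsto_of_complete (hcauchy t)
    choose Γ hΓ using hten
    have hΓLip : LipschitzWith K Γ := by
      apply LipschitzWith.of_dist_le_mul
      intro t u'
      apply le_of_tendsto ((hΓ t).dist (hΓ u'))
      exact Filter.Eventually.of_forall fun k => (hgam k).1.dist_le_mul t u'
    have hΓ0 : Γ 0 = x := by
      apply tendsto_nhds_unique (hΓ 0)
      have : (fun k => gam k 0) = fun _ => x := funext fun k => (hgam k).2.1
      rw [this]; exact tendsto_const_nhds
    have hlt : ∀ t, 0 ≤ t → t < s → F (Γ t) = ℓ t := by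
      intro t ht0 hts
      have hev : ∀ᶠ k in atTop, F (gam k t) = ℓ t := by
        have h1 : Filter.Tendsto (fun k : ℕ => (1:ℝ) / (k + 1)) atTop (nhds 0) :=
          tendsto_one_div_add_atTop_nhds_zero_nat
        filter_upwards [h1.eventually (gt_mem_nhds (by linarith : (0:ℝ) < s - t))] with k hk
        have : t ≤ w k := by have := hwk k; linarith
        exact (hgam k).2.2.1 t ⟨ht0, this⟩
      have h1 : Filter.Tendsto (fun k => F (gam k t)) atTop (nhds (F (Γ t))) :=
        (hFc.continuousAt.tendsto).comp (hΓ t)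
      exact tendsto_nhds_unique (h1.congr' (hev.mono fun k hk => hk)) tendsto_const_nhds
    refine ⟨Γ, hΓLip, hΓ0, ?_, ?_, ?_⟩
    · intro t ht
      rcases lt_or_eq_of_le ht.2 with h | h
      · exact hlt t ht.1 h
      · subst h
        rcases eq_or_lt_of_le ht.1 with h0 | h0
        · rw [← h0, hΓ0]
          simp [hℓdef]
        · -- continuity from the left
          have h1 : Filter.Tendsto (fun u => F (Γ u)) (nhdsWithin t (Iio t)) (nhds (F (Γ t))) :=
            ((hFc.comp hΓLip.continuous).tendsto t).mono_left nhdsWithin_le_nhds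
          have hev2 : (fun u => F (Γ u)) =ᶠ[nhdsWithin t (Iio t)] ℓ := by
            filter_upwards [Ioo_mem_nhdsLT h0] with u hu
            exact hlt u hu.1.le hu.2
          have h2 : Filter.Tendsto ℓ (nhdsWithin t (Iio t)) (nhds (ℓ t)) :=
            (hℓc.tendsto t).mono_left nhdsWithin_le_nhds
          exact tendsto_nhds_unique (h1.congr' hev2) h2
    · -- const after s
      intro t ht
      have heq : ∀ k, gam k t = gam k s := by
        intro k
        rw [(hgam k).2.2.2.1 t ((hws k).le.trans ht), (hgam k).2.2.2.1 s (hws k).le]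
      exact tendsto_nhds_unique (hΓ t) ((hΓ s).congr fun k => (heq k).symm)
    · -- const before 0
      intro t ht
      have heq : ∀ k, gam k t = gam k 0 := fun k => (hgam k).2.2.2.2 t ht
      exact tendsto_nhds_unique (hΓ t) ((hΓ 0).congr fun k => (heq k).symm)
  -- main continuous induction
  have main : Icc (0:ℝ) 1 ⊆ A := by
    apply IsClosed.Icc_subset_of_forall_exists_gt hclosed h0A
    rintro s ⟨hsA, hs0, hs1⟩ y hy
    obtain ⟨γ, hγL, hγ0, hγl, hγa, hγb⟩ := hsA
    set b := γ s with hbdef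
    have hFb : F b = ℓ s := hγl s ⟨hs0, le_rfl⟩
    obtain ⟨U, V, hUo, hVo, hbU, hFbV, hinj, ψ, hψb, hψ⟩ := had_chart hkey b
    have hℓsV : ℓ s ∈ V := hFb ▸ hFbV
    have hball : ∃ ε > 0, ∀ t : ℝ, dist t s < ε → ℓ t ∈ V := by
      have h1 : ∀ᶠ t in nhds s, ℓ t ∈ V :=
        hℓc.continuousAt.eventually_mem (hVo.mem_nhds hℓsV)
      obtain ⟨ε, hε, h2⟩ := Metric.eventually_nhds_iff.1 h1
      exact ⟨ε, hε, fun t ht => h2 ht⟩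
    obtain ⟨ε, hε, hballV⟩ := hball
    set s' := min y (s + ε/2) with hs'def
    have hss' : s < s' := lt_min hy (by linarith)
    have hs'le : s' ≤ s + ε/2 := min_le_right _ _
    have hIccV : ∀ t ∈ Icc s s', ℓ t ∈ V := by
      intro t ht
      apply hballV
      rw [Real.dist_eq, abs_of_nonneg (by linarith [ht.1])]
      have := ht.2
      linarith
    set D : (ℝ × ℝ) → ((ℝ × ℝ) →L[ℝ] (ℝ × ℝ)) := fun z =>
      if hz : z ∈ V then (hψ z hz).2.2.choose else 0 with hDdef
    have hD : ∀ z ∈ V, HasFDerivAt ψ (D z) z ∧ ‖D z‖ ≤ C := by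
      intro z hz
      have h := (hψ z hz).2.2.choose_spec
      rw [hDdef]
      simp only [dif_pos hz]
      exact ⟨h.1, h.2⟩
    set η : ℝ → ℝ × ℝ := fun t => ψ (ℓ t) with hηdef
    have hηd : ∀ t ∈ Icc s s', HasDerivAt η ((D (ℓ t)) v) t := by
      intro t ht
      have hℓd : HasDerivAt ℓ v t := by
        simpa [hℓdef] using ((hasDerivAt_id t).smul_const v).const_add (F x)
      exact ((hD (ℓ t) (hIccV t ht)).1).comp_hasDerivAt t hℓd
    have hηest : ∀ t₁ ∈ Icc s s', ∀ t₂ ∈ Icc s s', t₁ ≤ t₂ →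
        ‖η t₂ - η t₁‖ ≤ (K:ℝ) * (t₂ - t₁) := by
      intro t₁ h₁ t₂ h₂ h12
      have key := norm_image_sub_le_of_norm_deriv_le_segment'
        (f := η) (f' := fun w => D (ℓ w) v) (a := t₁) (b := t₂) (C := (K:ℝ))
        ?_ ?_ t₂ (right_mem_Icc.2 h12)
      · simpa using key
      · intro w hw
        have hw' : w ∈ Icc s s' := ⟨h₁.1.trans hw.1, hw.2.trans h₂.2⟩
        exact (hηd w hw').hasDerivWithinAt
      · intro w hw
        have hw' : w ∈ Icc s s' := ⟨h₁.1.trans hw.1, hw.2.le.trans h₂.2⟩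
        calc ‖D (ℓ w) v‖ ≤ ‖D (ℓ w)‖ * ‖v‖ := (D (ℓ w)).le_opNorm v
          _ ≤ C * ‖v‖ := mul_le_mul_of_nonneg_right (hD (ℓ w) (hIccV w hw')).2 (norm_nonneg v)
          _ = (K:ℝ) := hKr.symm
    have hγsη : γ s = η s := by
      show γ s = ψ (ℓ s)
      rw [← hFb, hψb]
    set γ' : ℝ → ℝ × ℝ := fun t => if t ≤ s then γ t else η (min t s') with hγ'def
    have hmono : ∀ t u : ℝ, t ≤ u → dist (γ' t) (γ' u) ≤ (K:ℝ) * (u - t) := by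
      intro t u htu
      rcases le_or_gt u s with hu | hu
      · have ht : t ≤ s := htu.trans hu
        show dist (if t ≤ s then γ t else _) (if u ≤ s then γ u else _) ≤ _
        rw [if_pos hu, if_pos ht]
        calc dist (γ t) (γ u) ≤ K * dist t u := hγL.dist_le_mul t u
          _ = (K:ℝ) * (u - t) := by rw [Real.dist_eq, abs_of_nonpos (by linarith), neg_sub]
      · rcases le_or_gt t s with ht | ht
        · show dist (if t ≤ s then γ t else _) (if u ≤ s then γ u else η (min u s')) ≤ _
          rw [if_pos ht, if_neg (not_le.2 hu)]
          have hm : min u s' ∈ Icc s s' := ⟨le_min hu.le hss'.le, min_le_right _ _⟩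
          have e1 : dist (γ t) (γ s) ≤ (K:ℝ) * (s - t) := by
            calc dist (γ t) (γ s) ≤ K * dist t s := hγL.dist_le_mul t s
              _ = (K:ℝ) * (s - t) := by rw [Real.dist_eq, abs_of_nonpos (by linarith), neg_sub]
          have e2 : dist (γ s) (η (min u s')) ≤ (K:ℝ) * (min u s' - s) := by
            rw [hγsη, dist_eq_norm, norm_sub_rev]
            exact hηest s ⟨le_rfl, hss'.le⟩ _ hm hm.1
          have e3 : min u s' - s ≤ u - s := by
            have := min_le_left u s'
            linarith
          calc dist (γ t) (η (min u s'))
              ≤ dist (γ t) (γ s) + dist (γ s) (η (min u s')) := dist_triangle _ _ _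
            _ ≤ (K:ℝ) * (s - t) + (K:ℝ) * (min u s' - s) := add_le_add e1 e2
            _ = (K:ℝ) * (min u s' - t) := by ring
            _ ≤ (K:ℝ) * (u - t) :=
                mul_le_mul_of_nonneg_left (by linarith [min_le_left u s']) K.2
        · show dist (if t ≤ s then γ t else η (min t s'))
              (if u ≤ s then γ u else η (min u s')) ≤ _
          rw [if_neg (not_le.2 ht), if_neg (not_le.2 (ht.trans_le htu))]
          have hm₁ : min t s' ∈ Icc s s' := ⟨le_min ht.le hss'.le, min_le_right _ _⟩
          have hm₂ : min u s' ∈ Icc s s' := ⟨le_min (ht.trans_le htu).le hss'.le, min_le_right _ _⟩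
          have h12 : min t s' ≤ min u s' := min_le_min htu le_rfl
          have hδ : min u s' - min t s' ≤ u - t := by
            rcases le_total u s' with h | h
            · rw [min_eq_left h, min_eq_left (htu.trans h)]
            · rcases le_total t s' with h' | h'
              · rw [min_eq_right h, min_eq_left h']
                linarith
              · rw [min_eq_right h, min_eq_right h']
                linarith
          calc dist (η (min t s')) (η (min u s'))
              = ‖η (min u s') - η (min t s')‖ := by rw [dist_eq_norm, norm_sub_rev]
            _ ≤ (K:ℝ) * (min u s' - min t s') := hηest _ hm₁ _ hm₂ h12
            _ ≤ (K:ℝ) * (u - t) := mul_le_mul_of_nonneg_left hδ K.2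
    have hs'A : s' ∈ A := by
      refine ⟨γ', ?_, ?_, ?_, ?_, ?_⟩
      · apply LipschitzWith.of_dist_le_mul
        intro t u
        rcases le_total t u with h | h
        · calc dist (γ' t) (γ' u) ≤ (K:ℝ) * (u - t) := hmono t u h
            _ = K * dist t u := by rw [Real.dist_eq, abs_of_nonpos (by linarith), neg_sub]
        · rw [dist_comm]
          calc dist (γ' u) (γ' t) ≤ (K:ℝ) * (t - u) := hmono u t h
            _ = K * dist t u := by rw [Real.dist_eq, abs_of_nonneg (by linarith)]
      · show (if (0:ℝ) ≤ s then γ 0 else _) = x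
        rw [if_pos hs0, hγ0]
      · intro t ht
        by_cases h : t ≤ s
        · show F (if t ≤ s then γ t else _) = ℓ t
          rw [if_pos h]
          exact hγl t ⟨ht.1, h⟩
        · show F (if t ≤ s then γ t else η (min t s')) = ℓ t
          rw [if_neg h, min_eq_left ht.2]
          exact (hψ (ℓ t) (hIccV t ⟨(not_le.1 h).le, ht.2⟩)).1
      · intro t ht
        have h1 : ¬ t ≤ s := not_le.2 (hss'.trans_le ht)
        have h2 : ¬ s' ≤ s := not_le.2 hss'
        show (if t ≤ s then γ t else η (min t s')) = (if s' ≤ s then γ s' else η (min s' s'))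
        rw [if_neg h1, if_neg h2, min_eq_right ht, min_self]
      · intro t ht
        have h1 : t ≤ s := ht.trans hs0
        show (if t ≤ s then γ t else _) = (if (0:ℝ) ≤ s then γ 0 else _)
        rw [if_pos h1, if_pos hs0, hγb t ht]
    exact ⟨s', hs'A, hss', min_le_left _ _⟩
  obtain ⟨γ, hL, h0, hl, -, -⟩ := main ⟨zero_le_one, le_rfl⟩
  exact ⟨γ, hL, h0, hl⟩

lemma had_chain {F : ℝ × ℝ → ℝ × ℝ} {C : ℝ} (hkey : HadKey F C) (hFc : Continuous F)
    (y x₀ : ℝ × ℝ) {γ : ℝ → ℝ × ℝ} (hγc : Continuous γ) (hγ0 : γ 0 = x₀)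
    (hγl : ∀ t ∈ Icc (0:ℝ) 1, F (γ t) = F x₀ + t • (y - F x₀)) :
    ∃ z : ℝ × ℝ, ∀ᶠ x in nhds x₀, ∀ γ' : ℝ → ℝ × ℝ, Continuous γ' → γ' 0 = x →
      (∀ t ∈ Icc (0:ℝ) 1, F (γ' t) = F x + t • (y - F x)) → γ' 1 = z := by
  classical
  set ℓ : (ℝ × ℝ) → ℝ → ℝ × ℝ := fun x t => F x + t • (y - F x) with hℓdef
  have hℓc : ∀ x, Continuous (ℓ x) := fun x =>
    continuous_const.add (continuous_id.smul continuous_const)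
  have hℓcx : ∀ t : ℝ, Continuous (fun x => ℓ x t) := fun t =>
    hFc.add (((continuous_const.sub hFc)).const_smul t)
  have hℓdist : ∀ (x : ℝ × ℝ), ∀ t ∈ Icc (0:ℝ) 1, dist (ℓ x t) (ℓ x₀ t) ≤ dist (F x) (F x₀) := by
    intro x t ht
    have heq : ℓ x t - ℓ x₀ t = (1 - t) • (F x - F x₀) := by
      show (F x + t • (y - F x)) - (F x₀ + t • (y - F x₀)) = (1 - t) • (F x - F x₀)
      simp only [smul_sub, sub_smul, one_smul]
      abel
    rw [dist_eq_norm, heq, norm_smul]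
    have h1 : ‖(1 - t : ℝ)‖ ≤ 1 := by
      rw [Real.norm_eq_abs, abs_of_nonneg (by linarith [ht.2])]
      linarith [ht.1]
    calc ‖(1 - t : ℝ)‖ * ‖F x - F x₀‖ ≤ 1 * ‖F x - F x₀‖ :=
          mul_le_mul_of_nonneg_right h1 (norm_nonneg _)
      _ = dist (F x) (F x₀) := by rw [one_mul, dist_eq_norm]
  -- charts along γ
  choose U V hUo hVo hbU hFbV hinj ψ hψb hψ using fun t : ℝ => had_chart hkey (γ t)
  have hψcont : ∀ t : ℝ, ContinuousOn (ψ t) (V t) := by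
    intro t z hz
    exact ((hψ t z hz).2.2.choose_spec.1.continuousAt).continuousWithinAt
  have hmemV : ∀ t ∈ Icc (0:ℝ) 1, ℓ x₀ t ∈ V t := by
    intro t ht
    show ℓ x₀ t ∈ V t
    have : F (γ t) = ℓ x₀ t := hγl t ht
    rw [← this]
    exact hFbV t
  have hr : ∀ t ∈ Icc (0:ℝ) 1, ∃ ρ > 0, ball (ℓ x₀ t) (2 * ρ) ⊆ V t := by
    intro t ht
    obtain ⟨r', hr', hsub⟩ := Metric.isOpen_iff.1 (hVo t) _ (hmemV t ht)
    refine ⟨r'/2, by linarith, ?_⟩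
    have : 2 * (r'/2) = r' := by ring
    rw [this]
    exact hsub
  choose! r hrpos hrsub using hr
  -- Lebesgue number for the cover
  set c : Icc (0:ℝ) 1 → Set ℝ := fun τ =>
    (ℓ x₀)⁻¹' (ball (ℓ x₀ (τ:ℝ)) (r (τ:ℝ))) ∩ γ⁻¹' (U (τ:ℝ)) with hcdef
  have hco : ∀ τ, IsOpen (c τ) := fun τ =>
    (isOpen_ball.preimage (hℓc x₀)).inter ((hUo _).preimage hγc)
  have hcov : Icc (0:ℝ) 1 ⊆ ⋃ τ, c τ := by
    intro w hw
    exact mem_iUnion.2 ⟨⟨w, hw⟩, mem_ball_self (hrpos w hw), hbU w⟩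
  obtain ⟨δ, hδ, hLeb⟩ := lebesgue_number_lemma_of_metric isCompact_Icc hco hcov
  -- subdivision
  obtain ⟨n, hn⟩ := exists_nat_gt (1/δ)
  set N := n + 1 with hNdef
  have hNpos : (0:ℝ) < N := by positivity
  have h1N : (1:ℝ)/N < δ := by
    rw [div_lt_iff₀ hNpos]
    rw [div_lt_iff₀ hδ] at hn
    calc (1:ℝ) < n * δ + δ := by nlinarith
      _ = δ * N := by push_cast [hNdef]; ring
  set u : ℕ → ℝ := fun i => (i:ℝ) / N with hudef
  have hu0 : u 0 = 0 := by simp [hudef]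
  have huN : u N = 1 := by rw [hudef]; exact div_self hNpos.ne'
  have humono : ∀ i : ℕ, u i ≤ u (i+1) := by
    intro i
    apply div_le_div_of_nonneg_right ?_ hNpos.le
    exact_mod_cast Nat.le_succ i
  have humem : ∀ i : ℕ, i ≤ N → u i ∈ Icc (0:ℝ) 1 := by
    intro i hi
    constructor
    · positivity
    · rw [div_le_one hNpos]
      exact_mod_cast hi
  have hseg : ∀ i : ℕ, i < N → Icc (u i) (u (i+1)) ⊆ ball (u i) δ := by
    intro i hi w hw
    rw [mem_ball, Real.dist_eq, abs_of_nonneg (by linarith [hw.1])]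
    have h2 : u (i+1) - u i = 1/N := by
      rw [hudef]
      push_cast
      ring
    have := hw.2
    linarith
  have hsegIcc : ∀ i : ℕ, i < N → Icc (u i) (u (i+1)) ⊆ Icc (0:ℝ) 1 := by
    intro i hi w hw
    exact ⟨le_trans (humem i hi.le).1 hw.1, le_trans hw.2 (humem (i+1) hi).2⟩
  have hτex : ∀ i : ℕ, i < N → ∃ τ : Icc (0:ℝ) 1, Icc (u i) (u (i+1)) ⊆ c τ := by
    intro i hi
    obtain ⟨τ, hτ⟩ := hLeb (u i) (humem i hi.le)
    exact ⟨τ, (hseg i hi).trans hτ⟩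
  choose! τ hτ using hτex
  set χ : ℕ → (ℝ × ℝ) → (ℝ × ℝ) := fun i x =>
    Nat.casesOn i x (fun j => ψ (τ j : ℝ) (ℓ x (u (j+1)))) with hχdef
  have hsegc : ∀ i : ℕ, i < N → ∀ w ∈ Icc (u i) (u (i+1)),
      ℓ x₀ w ∈ ball (ℓ x₀ (τ i : ℝ)) (r (τ i : ℝ)) ∧ γ w ∈ U (τ i : ℝ) := by
    intro i hi w hw
    have h := hτ i hi hw
    exact ⟨h.1, h.2⟩
  have hS : ∀ i : ℕ, i ≤ N → ∀ᶠ x in nhds x₀, ∀ γ' : ℝ → ℝ × ℝ, Continuous γ' → γ' 0 = x →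
      (∀ t ∈ Icc (0:ℝ) 1, F (γ' t) = ℓ x t) → γ' (u i) = χ i x := by
    intro i
    induction i with
    | zero =>
      intro _
      filter_upwards with x γ' _ h0 _
      show γ' (u 0) = x
      rw [hu0, h0]
    | succ j ih =>
      intro hjN
      have hj : j < N := hjN
      have Sj := ih hj.le
      have hχ0 : χ j x₀ = γ (u j) := by
        have h := Sj.self_of_nhds γ hγc hγ0 hγl
        exact h.symm
      have hχc : ContinuousAt (χ j) x₀ := by
        cases j with
        | zero => exact continuousAt_id
        | succ k =>
          have hk : k < N := lt_trans (Nat.lt_succ_self k) hj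
          have hmem : ℓ x₀ (u (k+1)) ∈ V (τ k : ℝ) := by
            have h1 := (hsegc k hk (u (k+1)) ⟨humono k, le_rfl⟩).1
            have h2 : ball (ℓ x₀ (τ k : ℝ)) (r (τ k:ℝ)) ⊆ ball (ℓ x₀ (τ k:ℝ)) (2 * r (τ k:ℝ)) :=
              ball_subset_ball (by linarith [hrpos (τ k:ℝ) (τ k).2])
            exact hrsub (τ k:ℝ) (τ k).2 (h2 h1)
          show ContinuousAt (fun x => ψ (τ k:ℝ) (ℓ x (u (k+1)))) x₀
          have hψca : ContinuousAt (ψ (τ k:ℝ)) (ℓ x₀ (u (k+1))) :=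
            (hψ (τ k:ℝ) _ hmem).2.2.choose_spec.1.continuousAt
          exact ContinuousAt.comp (g := ψ (τ k:ℝ)) (f := fun x => ℓ x (u (k+1))) (x := x₀)
            hψca (hℓcx (u (k+1))).continuousAt
      have hrj : 0 < r (τ j:ℝ) := hrpos _ (τ j).2
      have ev1 : ∀ᶠ x in nhds x₀, dist (F x) (F x₀) < r (τ j:ℝ) := by
        have h := (hFc.continuousAt (x := x₀)).eventually_mem
          (isOpen_ball.mem_nhds (mem_ball_self hrj))
        filter_upwards [h] with x hx using mem_ball.1 hx
      have hγujU : γ (u j) ∈ U (τ j:ℝ) := (hsegc j hj (u j) ⟨le_rfl, humono j⟩).2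
      have ev2 : ∀ᶠ x in nhds x₀, χ j x ∈ U (τ j:ℝ) := by
        apply hχc.eventually_mem ((hUo _).mem_nhds ?_)
        rw [hχ0]
        exact hγujU
      filter_upwards [Sj, ev1, ev2] with x hSx hx1 hx2
      intro γ' hγ'c hγ'0 hγ'l
      have hpV : ∀ w ∈ Icc (u j) (u (j+1)), ℓ x w ∈ V (τ j:ℝ) := by
        intro w hw
        have hwI : w ∈ Icc (0:ℝ) 1 := hsegIcc j hj hw
        have h1 := (hsegc j hj w hw).1
        apply hrsub (τ j:ℝ) (τ j).2
        rw [mem_ball] at h1 ⊢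
        calc dist (ℓ x w) (ℓ x₀ (τ j:ℝ))
            ≤ dist (ℓ x w) (ℓ x₀ w) + dist (ℓ x₀ w) (ℓ x₀ (τ j:ℝ)) := dist_triangle _ _ _
          _ ≤ dist (F x) (F x₀) + dist (ℓ x₀ w) (ℓ x₀ (τ j:ℝ)) := by
              linarith [hℓdist x w hwI]
          _ < r (τ j:ℝ) + r (τ j:ℝ) := by linarith
          _ = 2 * r (τ j:ℝ) := by ring
      have hstart : γ' (u j) ∈ U (τ j:ℝ) := by
        rw [hSx γ' hγ'c hγ'0 hγ'l]
        exact hx2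
      have htr := had_transport (hUo ((τ j:ℝ))) (hinj _)
        (fun z hz => ⟨(hψ _ z hz).1, (hψ _ z hz).2.1⟩) (hψcont _)
        (hℓc x) hγ'c (humono j) hpV hstart
        (fun w hw => hγ'l w (hsegIcc j hj hw))
      exact htr (u (j+1)) ⟨humono j, le_rfl⟩
  refine ⟨ψ (τ n:ℝ) y, ?_⟩
  filter_upwards [hS N le_rfl] with x hx γ' h1 h2 h3
  have h := hx γ' h1 h2 h3
  rw [huN] at h
  rw [h]
  show ψ (τ n:ℝ) (ℓ x (u N)) = ψ (τ n:ℝ) y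
  rw [huN]
  show ψ (τ n:ℝ) (F x + (1:ℝ) • (y - F x)) = ψ (τ n:ℝ) y
  congr 1
  simp

lemma had_existsUnique {F : ℝ × ℝ → ℝ × ℝ} {C : ℝ} (hkey : HadKey F C) (hC : 0 ≤ C)
    (y : ℝ × ℝ) : ∃! a : ℝ × ℝ, F a = y := by
  have hFc : Continuous F := by
    rw [continuous_iff_continuousAt]
    intro a
    obtain ⟨g, hg, -⟩ := hkey a
    exact hg.continuousAt
  have hl : ∀ x : ℝ × ℝ, ∃ γ : ℝ → ℝ × ℝ, Continuous γ ∧ γ 0 = x ∧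
      ∀ t ∈ Icc (0:ℝ) 1, F (γ t) = F x + t • (y - F x) := by
    intro x
    obtain ⟨γ, hL, h0, hlift⟩ := had_lift hkey hC x (y - F x)
    exact ⟨γ, hL.continuous, h0, hlift⟩
  choose Γ hΓc hΓ0 hΓl using hl
  set Φ : ℝ × ℝ → ℝ × ℝ := fun x => Γ x 1 with hΦdef
  have hΦy : ∀ x, F (Φ x) = y := by
    intro x
    have := hΓl x 1 ⟨zero_le_one, le_rfl⟩
    simpa using this
  have hΦfix : ∀ x, F x = y → Φ x = x := by
    intro x hx
    have huni := had_uniq hkey (hΓc x) continuous_const (s := 1) (γ' := fun _ => x)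
      (by rw [hΓ0]) ?_
    · exact huni 1 ⟨zero_le_one, le_rfl⟩
    · intro t ht
      rw [hΓl x t ht, hx]
      simp
  have hloc : ∀ x₀ : ℝ × ℝ, ∀ᶠ x in nhds x₀, Φ x = Φ x₀ := by
    intro x₀
    obtain ⟨z, hz⟩ := had_chain hkey hFc y x₀ (hΓc x₀) (hΓ0 x₀) (hΓl x₀)
    have hx₀ : Φ x₀ = z := hz.self_of_nhds (Γ x₀) (hΓc x₀) (hΓ0 x₀) (hΓl x₀)
    filter_upwards [hz] with x hx
    show Γ x 1 = Γ x₀ 1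
    rw [hx (Γ x) (hΓc x) (hΓ0 x) (hΓl x)]
    exact hx₀.symm
  have hconst : ∀ x, Φ x = Φ 0 := by
    intro x
    have hclopen : IsClopen {w : ℝ × ℝ | Φ w = Φ 0} := by
      constructor
      · rw [← isOpen_compl_iff, isOpen_iff_mem_nhds]
        intro w hw
        simp only [mem_compl_iff, mem_setOf_eq] at hw
        filter_upwards [hloc w] with w' hw'
        simp only [mem_compl_iff, mem_setOf_eq]
        intro hw'0
        apply hw
        rw [← hw']
        exact hw'0
      · rw [isOpen_iff_mem_nhds]
        intro w hw
        filter_upwards [hloc w] with w' hw'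
        show Φ w' = Φ 0
        rw [hw']
        exact hw
    rcases isClopen_iff.1 hclopen with h | h
    · exfalso
      have h0 : (0 : ℝ × ℝ) ∈ {w : ℝ × ℝ | Φ w = Φ 0} := rfl
      rw [h] at h0
      exact h0
    · have hx : x ∈ {w : ℝ × ℝ | Φ w = Φ 0} := by rw [h]; trivial
      exact hx
  refine ⟨Φ 0, hΦy 0, fun a ha => ?_⟩
  exact (hΦfix a ha).symm.trans (hconst a)

theorem hadamard_global_inverse (F : ℝ × ℝ → ℝ × ℝ) (C : ℝ)
    (hF : ContDiff ℝ 1 F)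
    (hinv : ∀ x : ℝ × ℝ, ∃ g : (ℝ × ℝ) ≃L[ℝ] (ℝ × ℝ),
      (g : (ℝ × ℝ) →L[ℝ] (ℝ × ℝ)) = fderiv ℝ F x ∧
        ‖(g.symm : (ℝ × ℝ) →L[ℝ] (ℝ × ℝ))‖ ≤ C) :
    Function.Bijective F ∧
      ∃ G : ℝ × ℝ → ℝ × ℝ, ContDiff ℝ 1 G ∧
        Function.LeftInverse G F ∧ Function.RightInverse G F := by
  have hkey : HadKey F C := by
    intro a
    obtain ⟨g, hfd, hnorm⟩ := hinv a
    refine ⟨g, ?_, hnorm⟩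
    have := (hF.contDiffAt (x := a)).hasStrictFDerivAt one_ne_zero
    rwa [← hfd] at this
  have hC : 0 ≤ C := by
    obtain ⟨g, -, hnorm⟩ := hinv 0
    exact le_trans (norm_nonneg _) hnorm
  have hbij : Function.Bijective F := by
    constructor
    · intro a b hab
      obtain ⟨w, hw, huniq⟩ := had_existsUnique hkey hC (F b)
      rw [huniq a hab, huniq b rfl]
    · intro z
      obtain ⟨a, ha, -⟩ := had_existsUnique hkey hC z
      exact ⟨a, ha⟩
  set G := Function.invFun F with hGdef
  have hleft : Function.LeftInverse G F := Function.leftInverse_invFun hbij.1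
  have hright : Function.RightInverse G F := Function.rightInverse_invFun hbij.2
  have hGC : ContDiff ℝ 1 G := by
    rw [contDiff_iff_contDiffAt]
    intro z
    set a := G z with ha
    have hFa : F a = z := hright z
    obtain ⟨g, hg, -⟩ := hkey a
    have hcd : ContDiffAt ℝ 1 F a := hF.contDiffAt
    have hfd : HasFDerivAt F (g : (ℝ × ℝ) →L[ℝ] (ℝ × ℝ)) a := hg.hasFDerivAt
    have hloc := hcd.to_localInverse (f' := g) hfd one_ne_zero
    have hev : G =ᶠ[nhds (F a)] hcd.localInverse hfd one_ne_zero := by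
      have h1 : ∀ᶠ w in nhds (F a), F ((hcd.localInverse hfd one_ne_zero) w) = w :=
        (hcd.hasStrictFDerivAt' hfd one_ne_zero).eventually_right_inverse
      filter_upwards [h1] with w hw
      exact hbij.1 ((hright w).trans hw.symm)
    have := hloc.congr_of_eventuallyEq hev
    rwa [hFa] at this
  exact ⟨hbij, G, hGC, hleft, hright⟩
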